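/- Let n ≥ 1 and let T be the n×n symmetric tridiagonal Toeplitz matrix with diagonal a and off-diagonals b, where b ≠ 0 and |a| > 2|b|. Then T is invertible and its inverse is given entrywise by (T^{-1})_{ij} = (−1)^{i+j} (1/b) · U_{i−1}(a/(2b)) U_{n−j}(a/(2b)) / U_n(a/(2b)) if i ≤ j, and (T^{-1})_{ij} = (−1)^{i+j} (1/b) · U_{j−1}(a/(2b)) U_{n−i}(a/(2b)) / U_n(a/(2b)) if i > j, where U_m denotes the m-th Chebyshev polynomial of the second kind evaluated over ℝ. -/

import Mathlib

open Polynomial Polynomial.Chebyshev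

noncomputable def uu (x : ℝ) (m : ℤ) : ℝ := (Chebyshev.U ℝ m).eval x

lemma uu_add_two (x : ℝ) (m : ℤ) : uu x (m+2) = 2*x*uu x (m+1) - uu x m := by
  simp [uu, U_add_two]

lemma uu_neg_one (x : ℝ) : uu x (-1) = 0 := by simp [uu, U_neg_one]
lemma uu_zero (x : ℝ) : uu x 0 = 1 := by simp [uu]
lemma uu_one (x : ℝ) : uu x 1 = 2*x := by simp [uu, U_one]

lemma uu_rec (x : ℝ) (m : ℤ) : uu x (m+1) + uu x (m-1) = 2*x*uu x m := by
  have h := uu_add_two x (m-1)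
  rw [show m-1+2 = m+1 by ring, show m-1+1 = m by ring] at h
  linarith

lemma uu_pos_aux (x : ℝ) (hx : 1 < |x|) :
    ∀ m : ℕ, 1 ≤ (if 0 ≤ x then 1 else -1 : ℝ)^m * uu x m ∧
      (if 0 ≤ x then 1 else -1 : ℝ)^m * uu x m <
        (if 0 ≤ x then 1 else -1 : ℝ)^(m+1) * uu x (m+1) := by
  set s : ℝ := if 0 ≤ x then 1 else -1 with hs
  have hsx : s * x = |x| := by
    rcases le_or_gt 0 x with h | h
    · simp [hs, h, abs_of_nonneg h]
    · simp [hs, not_le.2 h, abs_of_neg h]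
  have hss : s * s = 1 := by
    rcases le_or_gt 0 x with h | h
    · simp [hs, h]
    · simp [hs, not_le.2 h]
  intro m
  induction m with
  | zero =>
    constructor
    · simp [uu_zero]
    · simp only [pow_zero, one_mul, pow_one, Nat.cast_zero, uu_zero, zero_add, uu_one]
      have h1 : s * (2*x) = 2 * |x| := by rw [← hsx]; ring
      linarith
  | succ m ih =>
    obtain ⟨h1, h2⟩ := ih
    have e2 : s * s^(m+1) = s^m := by
      rw [← pow_succ', show m+1+1 = m+2 from rfl, pow_succ, pow_succ, mul_assoc, hss, mul_one]
    have hss2 : s^2 = 1 := by rw [sq]; exact hss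
    have key : s^(m+2) * uu x ((m:ℤ)+2) = 2*|x| * (s^(m+1) * uu x ((m:ℤ)+1)) - s^m * uu x m := by
      rw [uu_add_two, ← hsx, show m+2 = (m+1)+1 from rfl, pow_succ']
      linear_combination (-(s^m*uu x (m:ℤ))) * hss2
    constructor
    · push_cast
      nlinarith [key, h1, h2, hx]
    · push_cast
      rw [show (m:ℤ)+1+1 = (m:ℤ)+2 by ring, show m+1+1 = m+2 from rfl, key]
      nlinarith [h1, h2, hx]

lemma uu_ne_zero (x : ℝ) (hx : 1 < |x|) (m : ℕ) : uu x m ≠ 0 := by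
  have h := (uu_pos_aux x hx m).1
  intro h0
  rw [h0, mul_zero] at h
  linarith

lemma uu_mul (x : ℝ) : ∀ (m : ℕ) (p : ℤ),
    uu x (m+1) * uu x p - uu x m * uu x (p-1) = uu x (m+p+1) := by
  intro m
  induction m with
  | zero =>
    intro p
    have h := uu_rec x p
    push_cast
    simp only [uu_zero, uu_one, zero_add, one_mul]
    linarith
  | succ m ih =>
    intro p
    have h2 := uu_add_two x m
    have hrecp := uu_rec x p
    have key := ih (p+1)
    rw [show p+1-1 = p by ring] at key
    rw [show (m:ℤ)+(p+1)+1 = (m:ℤ)+1+p+1 by ring] at key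
    push_cast
    rw [show (m:ℤ)+1+1 = (m:ℤ)+2 by ring, h2]
    linear_combination key - uu x ((m:ℤ)+1) * hrecp

noncomputable def invEnt (x : ℝ) (n : ℕ) (b : ℝ) (i j : ℤ) : ℝ :=
  (-1:ℝ)^(i+j) * (1/b) * (uu x (min i j) * uu x ((n:ℤ)-1-max i j) / uu x n)

lemma invEnt_left (x : ℝ) (n : ℕ) (b : ℝ) (k : ℤ) (hk : -1 ≤ k) :
    invEnt x n b (-1) k = 0 := by
  unfold invEnt
  rw [min_eq_left hk, uu_neg_one]
  simp

lemma invEnt_right (x : ℝ) (n : ℕ) (b : ℝ) (k : ℤ) (hk : k ≤ n) :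
    invEnt x n b n k = 0 := by
  unfold invEnt
  rw [max_eq_left hk, show (n:ℤ)-1-n = -1 by ring, uu_neg_one]
  simp

lemma negone_zpow_sub_one (m : ℤ) : (-1:ℝ)^(m-1) = -(-1:ℝ)^m := by
  rw [zpow_sub_one₀ (by norm_num : (-1:ℝ) ≠ 0)]; norm_num

lemma negone_zpow_add_one (m : ℤ) : (-1:ℝ)^(m+1) = -(-1:ℝ)^m := by
  rw [zpow_add_one₀ (by norm_num : (-1:ℝ) ≠ 0)]; ring

lemma negone_zpow_double (i : ℤ) : (-1:ℝ)^(i+i) = 1 := by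
  rw [zpow_add₀ (by norm_num : (-1:ℝ) ≠ 0), ← mul_zpow]
  norm_num

lemma key_lemma (x : ℝ) (n : ℕ) (a b : ℝ) (hb : b ≠ 0) (hun : uu x n ≠ 0)
    (ha : a = 2*b*x) (i k : ℤ) (hi0 : 0 ≤ i) (hin : i < n) (hk0 : 0 ≤ k) (hkn : k < n) :
    b * invEnt x n b (i-1) k + a * invEnt x n b i k + b * invEnt x n b (i+1) k
      = if i = k then 1 else 0 := by
  have hr : ∀ m : ℤ, a * uu x m = b * (uu x (m+1) + uu x (m-1)) := by
    intro m
    rw [uu_rec x m, ha]; ring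
  rcases lt_trichotomy i k with h | h | h
  · rw [if_neg (by omega)]
    unfold invEnt
    rw [min_eq_left (by omega), min_eq_left (by omega), min_eq_left (by omega),
        max_eq_right (by omega : i-1 ≤ k), max_eq_right (by omega : i ≤ k),
        max_eq_right (by omega : i+1 ≤ k),
        show i-1+k = (i+k)-1 by ring, negone_zpow_sub_one,
        show i+1+k = (i+k)+1 by ring, negone_zpow_add_one]
    linear_combination ((-1:ℝ)^(i+k) * uu x ((n:ℤ)-1-k) / (b * uu x n)) * hr i
  · subst h
    rw [if_pos rfl]
    unfold invEnt
    rw [min_eq_left (by omega : i-1 ≤ i), max_eq_right (by omega : i-1 ≤ i),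
        min_self, max_self,
        min_eq_right (by omega : i ≤ i+1), max_eq_left (by omega : i ≤ i+1),
        show i-1+i = (i+i)-1 by ring, negone_zpow_sub_one,
        show i+1+i = (i+i)+1 by ring, negone_zpow_add_one, negone_zpow_double,
        show (n:ℤ)-1-(i+1) = (n:ℤ)-1-i-1 by ring]
    have hm : ((i.toNat : ℤ)) = i := Int.toNat_of_nonneg hi0
    have hprod := uu_mul x i.toNat ((n:ℤ)-1-i)
    rw [hm, show i+((n:ℤ)-1-i)+1 = (n:ℤ) by ring] at hprod
    field_simp
    linear_combination uu x ((n:ℤ)-1-i) * hr i + b * hprod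
  · rw [if_neg (by omega)]
    unfold invEnt
    rw [min_eq_right (by omega : k ≤ i-1), min_eq_right (by omega : k ≤ i),
        min_eq_right (by omega : k ≤ i+1),
        max_eq_left (by omega : k ≤ i-1), max_eq_left (by omega : k ≤ i),
        max_eq_left (by omega : k ≤ i+1),
        show i-1+k = (i+k)-1 by ring, negone_zpow_sub_one,
        show i+1+k = (i+k)+1 by ring, negone_zpow_add_one,
        show (n:ℤ)-1-(i-1) = ((n:ℤ)-1-i)+1 by ring,
        show (n:ℤ)-1-(i+1) = ((n:ℤ)-1-i)-1 by ring]
    linear_combination ((-1:ℝ)^(i+k) * uu x k / (b * uu x n)) * hr ((n:ℤ)-1-i)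

lemma sum_ite_coe (n m : ℕ) (f : Fin n → ℝ) :
    ∑ j : Fin n, (if (j:ℕ) = m then f j else 0) = if h : m < n then f ⟨m, h⟩ else 0 := by
  split
  · next h =>
    rw [Finset.sum_eq_single (⟨m, h⟩ : Fin n)]
    · simp
    · intro j _ hj
      rw [if_neg]
      intro hc
      exact hj (Fin.ext hc)
    · intro hmem
      exact absurd (Finset.mem_univ _) hmem
  · next h =>
    apply Finset.sum_eq_zero
    intro j _
    rw [if_neg]
    intro hc
    exact h (hc ▸ j.isLt)

/-- The `n × n` symmetric tridiagonal Toeplitz matrix with diagonal `a` and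
off-diagonals `b` (0-based `Fin n` indexing of the 1-based matrix). -/
def tridiagToeplitz (n : ℕ) (a b : ℝ) : Matrix (Fin n) (Fin n) ℝ :=
  Matrix.of fun i j =>
    if (i : ℕ) = (j : ℕ) then a
    else if (i : ℕ) + 1 = (j : ℕ) ∨ (j : ℕ) + 1 = (i : ℕ) then b
    else 0

/-- explicit inverse of the symmetric tridiagonal Toeplitz matrix in terms
of Chebyshev polynomials of the second kind (entry `(i, j)` of `T⁻¹` corresponds to the
1-based entry `(i+1, j+1)`). -/
theorem explicit_inverse_chebyshev (n : ℕ) (hn : 1 ≤ n) (a b : ℝ) (hb : b ≠ 0)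
    (hab : 2 * |b| < |a|) (T : Matrix (Fin n) (Fin n) ℝ)
    (hT : T = tridiagToeplitz n a b) :
    IsUnit T.det ∧
      ∀ i j : Fin n,
        T⁻¹ i j =
          if (i : ℕ) ≤ (j : ℕ) then
            (-1 : ℝ) ^ (((i : ℕ) + 1) + ((j : ℕ) + 1)) * (1 / b) *
              ((Polynomial.Chebyshev.U ℝ (((i : ℕ) + 1 : ℤ) - 1)).eval (a / (2 * b)) *
                (Polynomial.Chebyshev.U ℝ ((n : ℤ) - ((j : ℕ) + 1 : ℤ))).eval (a / (2 * b)) /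
                (Polynomial.Chebyshev.U ℝ (n : ℤ)).eval (a / (2 * b)))
          else
            (-1 : ℝ) ^ (((i : ℕ) + 1) + ((j : ℕ) + 1)) * (1 / b) *
              ((Polynomial.Chebyshev.U ℝ (((j : ℕ) + 1 : ℤ) - 1)).eval (a / (2 * b)) *
                (Polynomial.Chebyshev.U ℝ ((n : ℤ) - ((i : ℕ) + 1 : ℤ))).eval (a / (2 * b)) /
                (Polynomial.Chebyshev.U ℝ (n : ℤ)).eval (a / (2 * b))) := by
  set x : ℝ := a/(2*b) with hx
  have hb' : 0 < |b| := abs_pos.2 hb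
  have hxabs : 1 < |x| := by
    rw [hx, abs_div, lt_div_iff₀ (by positivity), abs_mul, abs_two]
    linarith
  have hun : uu x n ≠ 0 := uu_ne_zero x hxabs n
  have ha : a = 2*b*x := by rw [hx]; field_simp
  set S : Matrix (Fin n) (Fin n) ℝ :=
    Matrix.of (fun i j : Fin n => invEnt x n b (i:ℕ) (j:ℕ)) with hS
  have hTS : T * S = 1 := by
    ext i k
    rw [Matrix.mul_apply]
    have hdecomp : ∀ j : Fin n, T i j * S j k =
        (if (j:ℕ) = (i:ℕ) then a * S j k else 0)
        + (if (j:ℕ) = (i:ℕ)+1 then b * S j k else 0)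
        + (if (j:ℕ)+1 = (i:ℕ) then b * S j k else 0) := by
      intro j
      rw [hT]
      simp only [tridiagToeplitz, Matrix.of_apply]
      split_ifs
      all_goals try (exfalso; omega)
      all_goals ring
    rw [Finset.sum_congr rfl (fun j _ => hdecomp j), Finset.sum_add_distrib,
      Finset.sum_add_distrib, sum_ite_coe, sum_ite_coe]
    have term1 : (if h : (i:ℕ) < n then a * S ⟨(i:ℕ), h⟩ k else 0)
        = a * invEnt x n b ((i:ℕ):ℤ) ((k:ℕ):ℤ) := by
      rw [dif_pos i.isLt]
      simp [hS]
    have term2 : (if h : (i:ℕ)+1 < n then b * S ⟨(i:ℕ)+1, h⟩ k else 0)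
        = b * invEnt x n b (((i:ℕ):ℤ)+1) ((k:ℕ):ℤ) := by
      split
      · next h =>
        simp only [hS, Matrix.of_apply]
        norm_cast
      · next h =>
        have he : ((i:ℕ):ℤ)+1 = (n:ℤ) := by
          have := i.isLt
          omega
        rw [he, invEnt_right x n b _ (by have := k.isLt; omega), mul_zero]
    have term3 : (∑ j : Fin n, if (j:ℕ)+1 = (i:ℕ) then b * S j k else 0)
        = b * invEnt x n b (((i:ℕ):ℤ)-1) ((k:ℕ):ℤ) := by
      rcases Nat.eq_zero_or_pos (i:ℕ) with h0 | h0
      · rw [Finset.sum_eq_zero (fun j _ => by rw [if_neg]; omega),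
          show ((i:ℕ):ℤ)-1 = -1 by omega,
          invEnt_left x n b _ (by omega), mul_zero]
      · have hcond : ∀ j : Fin n, ((j:ℕ)+1 = (i:ℕ)) = ((j:ℕ) = (i:ℕ)-1) :=
          fun j => propext (by omega)
        simp only [hcond]
        rw [sum_ite_coe, dif_pos (by omega : (i:ℕ)-1 < n)]
        have hc : (((i:ℕ)-1 : ℕ):ℤ) = ((i:ℕ):ℤ)-1 := by omega
        simp only [hS, Matrix.of_apply, hc]
    rw [term1, term2, term3, Matrix.one_apply]
    have hkey := key_lemma x n a b hb hun ha ((i:ℕ):ℤ) ((k:ℕ):ℤ)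
      (Int.natCast_nonneg _) (by exact_mod_cast i.isLt)
      (Int.natCast_nonneg _) (by exact_mod_cast k.isLt)
    by_cases hik : i = k
    · rw [if_pos hik, if_pos (by rw [hik])] at *
      linarith [hkey]
    · rw [if_neg hik, if_neg (by simpa [Fin.ext_iff] using hik)] at *
      linarith [hkey]
  refine ⟨Matrix.isUnit_det_of_right_inverse hTS, ?_⟩
  intro i j
  rw [Matrix.inv_eq_right_inv hTS]
  have hsign : ((-1:ℝ))^(((i:ℕ)+1)+((j:ℕ)+1)) = (-1:ℝ)^(((i:ℕ):ℤ)+((j:ℕ):ℤ)) := by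
    rw [← zpow_natCast]
    push_cast
    rw [show ((i:ℕ):ℤ)+1+(((j:ℕ):ℤ)+1) = ((((i:ℕ):ℤ)+((j:ℕ):ℤ))+1)+1 by ring,
      negone_zpow_add_one, negone_zpow_add_one, neg_neg]
  show invEnt x n b ((i:ℕ):ℤ) ((j:ℕ):ℤ) = _
  unfold invEnt
  split
  · next hle =>
    rw [min_eq_left (by exact_mod_cast hle), max_eq_right (by exact_mod_cast hle), hsign,
      show ((i:ℕ)+1:ℤ)-1 = ((i:ℕ):ℤ) by push_cast; ring,
      show (n:ℤ)-((j:ℕ)+1:ℤ) = (n:ℤ)-1-((j:ℕ):ℤ) by push_cast; ring]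
    simp only [uu]
  · next hle =>
    have hle' : ((j:ℕ):ℤ) ≤ ((i:ℕ):ℤ) := by
      have := not_le.1 hle
      omega
    rw [min_eq_right hle', max_eq_left hle', hsign,
      show ((j:ℕ)+1:ℤ)-1 = ((j:ℕ):ℤ) by push_cast; ring,
      show (n:ℤ)-((i:ℕ)+1:ℤ) = (n:ℤ)-1-((i:ℕ):ℤ) by push_cast; ring]
    simp only [uu]
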